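/- Let p be an odd prime, n ≥ 1, u a unit modulo p, and 1 ≤ k ≤ n. The congruence y² ≡ u·p^k (mod p^n) has a solution y ∈ Z/p^nZ if and only if either k = n, or k is even and u is a quadratic residue modulo p. -/

import Mathlib

lemma sqrt_lift_aux (p : ℕ) (hp : p.Prime) (hodd : p ≠ 2) (u : ℤ) (hu : ¬ (p : ℤ) ∣ u)
    (h : ∃ z : ZMod p, z ^ 2 = (u : ZMod p)) (j : ℕ) :
    ∃ w : ℤ, (p : ℤ) ^ (j + 1) ∣ w ^ 2 - u := by
  haveI : Fact p.Prime := ⟨hp⟩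
  induction j with
  | zero =>
    obtain ⟨z, hz⟩ := h
    refine ⟨(z.val : ℤ), ?_⟩
    rw [pow_one, ← ZMod.intCast_zmod_eq_zero_iff_dvd]
    push_cast
    rw [ZMod.natCast_val, ZMod.cast_id, hz, sub_self]
  | succ j ih =>
    obtain ⟨w, c, hc⟩ := ih
    have hpw : ¬ (p : ℤ) ∣ w := by
      intro hdvd
      apply hu
      have h1 : (p : ℤ) ∣ w ^ 2 - u :=
        dvd_trans (dvd_pow_self _ (Nat.succ_ne_zero j)) ⟨c, hc⟩
      have h2 : (p : ℤ) ∣ w ^ 2 := dvd_pow hdvd two_ne_zero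
      have := dvd_sub h2 h1
      simpa using this
    have hw0 : (w : ZMod p) ≠ 0 := by
      rw [Ne, ZMod.intCast_zmod_eq_zero_iff_dvd]; exact hpw
    have h20 : (2 : ZMod p) ≠ 0 := by
      have hnd : ¬ (p : ℤ) ∣ 2 := by
        rw [show (2 : ℤ) = ((2 : ℕ) : ℤ) by norm_num, Int.natCast_dvd_natCast]
        exact fun hd => hodd ((Nat.prime_dvd_prime_iff_eq hp Nat.prime_two).mp hd)
      rw [show (2 : ZMod p) = ((2 : ℤ) : ZMod p) by push_cast; ring, Ne,
        ZMod.intCast_zmod_eq_zero_iff_dvd]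
      exact hnd
    set τ : ZMod p := -(c : ZMod p) * ((2 : ZMod p) * (w : ZMod p))⁻¹ with hτ
    have hpt : (p : ℤ) ∣ 2 * w * (τ.val : ℤ) + c := by
      rw [← ZMod.intCast_zmod_eq_zero_iff_dvd]
      push_cast
      rw [ZMod.natCast_val, ZMod.cast_id, hτ]
      field_simp
      ring
    obtain ⟨d, hd⟩ := hpt
    set t : ℤ := (τ.val : ℤ) with ht
    refine ⟨w + t * (p : ℤ) ^ (j + 1), d + t ^ 2 * (p : ℤ) ^ j, ?_⟩
    linear_combination hc + (p : ℤ) ^ (j + 1) * hd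

theorem square_of_unit_times_prime_power (p n k : ℕ) (u : ℤ) (hp : p.Prime) (hodd : p ≠ 2)
    (hn : 1 ≤ n) (hk1 : 1 ≤ k) (hkn : k ≤ n) (hu : ¬ (p : ℤ) ∣ u) :
    (∃ y : ZMod (p ^ n), y ^ 2 = ((u * (p : ℤ) ^ k : ℤ) : ZMod (p ^ n))) ↔
      k = n ∨ (Even k ∧ ∃ z : ZMod p, z ^ 2 = (u : ZMod p)) := by
  haveI : Fact p.Prime := ⟨hp⟩
  haveI : NeZero (p ^ n) := ⟨pow_ne_zero n hp.pos.ne'⟩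
  have hp0 : (p : ℤ) ≠ 0 := by exact_mod_cast hp.pos.ne'
  constructor
  · rintro ⟨y, hy⟩
    by_cases hkeq : k = n
    · exact Or.inl hkeq
    have hklt : k < n := lt_of_le_of_ne hkn hkeq
    right
    set Y : ℤ := (y.val : ℤ) with hY
    have hdvd : ((p : ℤ)) ^ n ∣ Y ^ 2 - u * (p : ℤ) ^ k := by
      have : ((Y ^ 2 - u * (p : ℤ) ^ k : ℤ) : ZMod (p ^ n)) = 0 := by
        push_cast
        rw [hY]
        push_cast
        rw [ZMod.natCast_val, ZMod.cast_id, hy]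
        push_cast
        ring
      rw [ZMod.intCast_zmod_eq_zero_iff_dvd] at this
      exact_mod_cast this
    have hY0 : Y ≠ 0 := by
      intro hYz
      rw [hYz] at hdvd
      have h1 : (p : ℤ) ^ n ∣ u * (p : ℤ) ^ k := by
        have := hdvd; simpa using (dvd_neg.mpr this)
      have h2 : (p : ℤ) ^ (k + 1) ∣ u * (p : ℤ) ^ k :=
        (pow_dvd_pow _ (by omega)).trans h1
      obtain ⟨e, he⟩ := h2
      apply hu
      refine ⟨e, ?_⟩
      have : (p : ℤ) ^ k * u = (p : ℤ) ^ k * ((p : ℤ) * e) := by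
        rw [mul_comm] at he; rw [he]; ring
      exact mul_left_cancel₀ (pow_ne_zero _ hp0) this
    have hfin : FiniteMultiplicity (p : ℤ) Y :=
      Int.finiteMultiplicity_iff.mpr ⟨by simpa using hp.ne_one, hY0⟩
    obtain ⟨W, hYW, hW⟩ := hfin.exists_eq_pow_mul_and_not_dvd
    set m : ℕ := multiplicity (p : ℤ) Y with hm
    have hkm : k = 2 * m := by
      rcases lt_trichotomy (2 * m) k with hlt | heq | hgt
      · exfalso
        have h1 : (p : ℤ) ^ (2 * m + 1) ∣ Y ^ 2 - u * (p : ℤ) ^ k :=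
          (pow_dvd_pow _ (by omega)).trans hdvd
        have h2 : (p : ℤ) ^ (2 * m + 1) ∣ u * (p : ℤ) ^ k :=
          Dvd.dvd.mul_left ((pow_dvd_pow _ (by omega))) u
        have h3 : (p : ℤ) ^ (2 * m + 1) ∣ Y ^ 2 := by
          have := dvd_add h1 h2
          simpa using this
        rw [hYW] at h3
        have h4 : (p : ℤ) ^ (2 * m) * ((p : ℤ) * 1) ∣ (p : ℤ) ^ (2 * m) * W ^ 2 := by
          have : ((p : ℤ) ^ m * W) ^ 2 = (p : ℤ) ^ (2 * m) * W ^ 2 := by ring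
          rw [this] at h3
          calc (p : ℤ) ^ (2 * m) * ((p : ℤ) * 1) = (p : ℤ) ^ (2 * m + 1) := by ring
          _ ∣ _ := h3
        have h5 : (p : ℤ) * 1 ∣ W ^ 2 := mul_dvd_mul_iff_left (pow_ne_zero _ hp0) |>.mp h4
        rw [mul_one] at h5
        exact hW ((Nat.prime_iff_prime_int.mp hp).dvd_of_dvd_pow h5)
      · omega
      · exfalso
        have h1 : (p : ℤ) ^ (k + 1) ∣ Y ^ 2 - u * (p : ℤ) ^ k :=
          (pow_dvd_pow _ (by omega)).trans hdvd
        have h2 : (p : ℤ) ^ (k + 1) ∣ Y ^ 2 := by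
          rw [hYW]
          have : ((p : ℤ) ^ m * W) ^ 2 = (p : ℤ) ^ (2 * m) * W ^ 2 := by ring
          rw [this]
          exact Dvd.dvd.mul_right (pow_dvd_pow _ (by omega)) _
        have h3 : (p : ℤ) ^ (k + 1) ∣ u * (p : ℤ) ^ k := by
          have := dvd_sub h2 h1
          simpa using this
        obtain ⟨e, he⟩ := h3
        apply hu
        refine ⟨e, ?_⟩
        have : (p : ℤ) ^ k * u = (p : ℤ) ^ k * ((p : ℤ) * e) := by
          rw [mul_comm] at he; rw [he]; ring
        exact mul_left_cancel₀ (pow_ne_zero _ hp0) this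
    refine ⟨⟨m, by omega⟩, (W : ZMod p), ?_⟩
    have h1 : (p : ℤ) ^ k * (p : ℤ) ^ (n - k) ∣ (p : ℤ) ^ k * (W ^ 2 - u) := by
      rw [← pow_add]
      have hnk : k + (n - k) = n := by omega
      rw [hnk]
      have : Y ^ 2 - u * (p : ℤ) ^ k = (p : ℤ) ^ k * (W ^ 2 - u) := by
        rw [hYW, hkm]; ring
      rw [← this]
      exact hdvd
    have h2 : (p : ℤ) ^ (n - k) ∣ W ^ 2 - u :=
      (mul_dvd_mul_iff_left (pow_ne_zero _ hp0)).mp h1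
    have h3 : (p : ℤ) ∣ W ^ 2 - u := by
      refine dvd_trans ?_ h2
      have : (p : ℤ) ^ 1 ∣ (p : ℤ) ^ (n - k) := pow_dvd_pow _ (by omega)
      simpa using this
    have : ((W ^ 2 - u : ℤ) : ZMod p) = 0 := by
      rw [ZMod.intCast_zmod_eq_zero_iff_dvd]; exact h3
    push_cast at this
    linear_combination this
  · rintro (rfl | ⟨⟨m, hm⟩, hz⟩)
    · refine ⟨0, ?_⟩
      have : ((u * (p : ℤ) ^ k : ℤ) : ZMod (p ^ k)) = 0 := by
        rw [ZMod.intCast_zmod_eq_zero_iff_dvd]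
        push_cast
        exact Dvd.intro_left u rfl
      rw [this]
      ring
    · by_cases hkeq : k = n
      · subst hkeq
        refine ⟨0, ?_⟩
        have : ((u * (p : ℤ) ^ k : ℤ) : ZMod (p ^ k)) = 0 := by
          rw [ZMod.intCast_zmod_eq_zero_iff_dvd]
          push_cast
          exact Dvd.intro_left u rfl
        rw [this]
        ring
      · have hklt : k < n := lt_of_le_of_ne hkn hkeq
        obtain ⟨w, hw⟩ := sqrt_lift_aux p hp hodd u hu hz (n - k - 1)
        have hw' : (p : ℤ) ^ (n - k) ∣ w ^ 2 - u := by
          have : n - k - 1 + 1 = n - k := by omega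
          rwa [this] at hw
        refine ⟨((w * (p : ℤ) ^ m : ℤ) : ZMod (p ^ n)), ?_⟩
        have hdvd : (p : ℤ) ^ n ∣ (w * (p : ℤ) ^ m) ^ 2 - u * (p : ℤ) ^ k := by
          have hnk : n = k + (n - k) := by omega
          rw [hnk, pow_add]
          have : (w * (p : ℤ) ^ m) ^ 2 - u * (p : ℤ) ^ k = (p : ℤ) ^ k * (w ^ 2 - u) := by
            rw [hm]; ring
          rw [this]
          exact mul_dvd_mul_left _ hw'
        have : (((w * (p : ℤ) ^ m) ^ 2 - u * (p : ℤ) ^ k : ℤ) : ZMod (p ^ n)) = 0 := by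
          rw [ZMod.intCast_zmod_eq_zero_iff_dvd]
          exact_mod_cast hdvd
        push_cast at this ⊢
        linear_combination this
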